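/- Let a, b ∈ ℂ with Re(a) > 0 and Re(b) > 0, let σ ∈ ℂ, and let Ŝ_n(x;a,b) be the symmetric Bannai–Ito polynomials. Then for every n ∈ ℕ and every x ∈ ℂ with 2ix ≠ 1 and 2ix ≠ −1, B(x)·Ŝ_n(x+i) + A(x)·Ŝ_n(x−i) + C(x)·Ŝ_n(−x) − (A(x)+B(x)+C(x))·Ŝ_n(x) + (σ/2)·(Ŝ_n(x) − Ŝ_n(−x)) = Λ_n^{(σ)}·Ŝ_n(x), where A(x) = (ix+a)(ix+b)/(2(1+2ix)), B(x) = (ix−a)(ix−b)/(2(1−2ix)), C(x) = (a+b)/2 − A(x) − B(x), and Λ_{2m}^{(σ)} = m, Λ_{2m+1}^{(σ)} = m + σ. -/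

import Mathlib

open Polynomial Finset Complex

/-- The Pochhammer symbol `(a)ₖ = a(a+1)⋯(a+k-1)` for complex `a`. -/
noncomputable def pochC (a : ℂ) (k : ℕ) : ℂ := (ascPochhammer ℂ k).eval a

/-- The symmetric Bannai–Ito polynomials `Ŝₙ(x;a,b)`, given by their
continuous-dual-Hahn-type terminating ₃F₂ hypergeometric expressions. -/
noncomputable def symBI (a b : ℂ) (n : ℕ) : Polynomial ℂ :=
  let m : ℕ := n / 2
  if Even n then
    C ((-1 : ℂ) ^ m * pochC a m * pochC b m) *
      ∑ k ∈ range (m + 1),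
        C (pochC (-(m : ℂ)) k / (pochC a k * pochC b k * (k.factorial : ℂ))) *
          ∏ j ∈ range k, (C ((j : ℂ) ^ 2) + X ^ 2)
  else
    C ((-1 : ℂ) ^ m * pochC (1 + a) m * pochC (1 + b) m) * X *
      ∑ k ∈ range (m + 1),
        C (pochC (-(m : ℂ)) k / (pochC (1 + a) k * pochC (1 + b) k * (k.factorial : ℂ))) *
          ∏ j ∈ Icc 1 k, (C ((j : ℂ) ^ 2) + X ^ 2)

/-- The eigenvalues `Λₙ⁽ᶜ⁾` of the Dunkl-type operator `D_σ` on the symmetric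
Bannai–Ito polynomials: `Λ_{2m} = m`, `Λ_{2m+1} = m + σ`. -/
noncomputable def symBIeigen (σ : ℂ) (n : ℕ) : ℂ :=
  let m : ℕ := n / 2
  if Even n then (m : ℂ) else (m : ℂ) + σ

/-! ### Auxiliary machinery for the proof -/

/-- Even-case product basis `∏_{j<k} (j² - s²)` (here `s = i·x`). -/
noncomputable def PhiS (k : ℕ) (s : ℂ) : ℂ := ∏ j ∈ range k, ((j:ℂ)^2 - s^2)

/-- Odd-case product basis `∏_{1≤j≤k} (j² - s²)`. -/
noncomputable def RhoS (k : ℕ) (s : ℂ) : ℂ := ∏ j ∈ Icc 1 k, ((j:ℂ)^2 - s^2)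

/-- Hypergeometric coefficients. -/
noncomputable def tc (a b : ℂ) (m k : ℕ) : ℂ :=
  pochC (-(m:ℂ)) k / (pochC a k * pochC b k * (k.factorial : ℂ))

lemma pochC_zero (a : ℂ) : pochC a 0 = 1 := by simp [pochC]

lemma pochC_succ (a : ℂ) (k : ℕ) : pochC a (k+1) = pochC a k * (a + k) := by
  simp [pochC, ascPochhammer_succ_right]

lemma pochC_ne_zero {a : ℂ} (ha : 0 < a.re) (k : ℕ) : pochC a k ≠ 0 := by
  induction k with
  | zero => simp [pochC_zero]
  | succ k ih =>
    rw [pochC_succ]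
    refine mul_ne_zero ih ?_
    intro h
    have : (a + k).re = 0 := by rw [h]; simp
    simp only [Complex.add_re, Complex.natCast_re] at this
    have : (0:ℝ) < a.re + k := by positivity
    linarith

lemma PhiS_succ (k : ℕ) (s : ℂ) : PhiS (k+1) s = PhiS k s * ((k:ℂ)^2 - s^2) := by
  simp [PhiS, prod_range_succ]

lemma RhoS_succ (k : ℕ) (s : ℂ) : RhoS (k+1) s = RhoS k s * (((k:ℂ)+1)^2 - s^2) := by
  rw [RhoS, RhoS, prod_Icc_succ_top (Nat.le_add_left 1 k)]
  push_cast; ring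

lemma E1 (k : ℕ) (s : ℂ) :
    (-s) * PhiS (k+1) (s-1) = (s-1)*((k:ℂ)-s)*((k:ℂ)+1-s) * PhiS k s := by
  induction k with
  | zero => simp [PhiS_succ, PhiS]; ring
  | succ k ih =>
    rw [PhiS_succ (k+1) (s-1), PhiS_succ k s]
    push_cast
    linear_combination (((k:ℂ)+1)^2 - (s-1)^2) * ih

lemma E2 (k : ℕ) (s : ℂ) :
    s * PhiS (k+1) (s+1) = (-s-1)*((k:ℂ)+s)*((k:ℂ)+1+s) * PhiS k s := by
  induction k with
  | zero => simp [PhiS_succ, PhiS]; ring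
  | succ k ih =>
    rw [PhiS_succ (k+1) (s+1), PhiS_succ k s]
    push_cast
    linear_combination (((k:ℂ)+1)^2 - (s+1)^2) * ih

lemma O1 (k : ℕ) (s : ℂ) :
    (1-s) * RhoS (k+1) (s-1) = s*((k:ℂ)+1-s)*((k:ℂ)+2-s) * RhoS k s := by
  induction k with
  | zero => simp [RhoS_succ, RhoS]; ring
  | succ k ih =>
    rw [RhoS_succ (k+1) (s-1), RhoS_succ k s]
    push_cast
    linear_combination ((((k:ℂ)+1)+1)^2 - (s-1)^2) * ih

lemma O2 (k : ℕ) (s : ℂ) :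
    (1+s) * RhoS (k+1) (s+1) = (-s)*((k:ℂ)+1+s)*((k:ℂ)+2+s) * RhoS k s := by
  induction k with
  | zero => simp [RhoS_succ, RhoS]; ring
  | succ k ih =>
    rw [RhoS_succ (k+1) (s+1), RhoS_succ k s]
    push_cast
    linear_combination ((((k:ℂ)+1)+1)^2 - (s+1)^2) * ih

lemma PTE (a b : ℂ) (k : ℕ) (s : ℂ) :
    s^2 * ( (2*(1+2*s)*(s-a)*(s-b)) * PhiS (k+1) (s-1)
          + (2*(1-2*s)*(s+a)*(s+b)) * PhiS (k+1) (s+1)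
          - (2*(1-2*s)*(s+a)*(s+b) + 2*(1+2*s)*(s-a)*(s-b)) * PhiS (k+1) s )
    = s^2 * (4*(1-4*s^2)) *
        ( ((k:ℂ)+1) * PhiS (k+1) s - ((k:ℂ)+1)*(a+k)*(b+k) * PhiS k s ) := by
  linear_combination (-s*(2*(1+2*s)*(s-a)*(s-b))) * E1 k s
    + (s*(2*(1-2*s)*(s+a)*(s+b))) * E2 k s
    + (- s^2 * (2*(1-2*s)*(s+a)*(s+b) + 2*(1+2*s)*(s-a)*(s-b))
       + s^2 * (4*(1-4*s^2)) * ((k:ℂ)+1) - 8*s^2*((k:ℂ)+1)*(1-4*s^2)) * PhiS_succ k s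

lemma PTO (a b : ℂ) (k : ℕ) (s : ℂ) :
    (1-s^2) * ( (2*(1+2*s)*(s-a)*(s-b)) * ((s-1) * RhoS (k+1) (s-1))
          + (2*(1-2*s)*(s+a)*(s+b)) * ((s+1) * RhoS (k+1) (s+1))
          + (2*(1-2*s)*(s+a)*(s+b) + 2*(1+2*s)*(s-a)*(s-b)
              - 4*(1-4*s^2)*(a+b)) * (s * RhoS (k+1) s) )
    = (1-s^2) * (4*(1-4*s^2)) *
        ( ((k:ℂ)+1) * (s * RhoS (k+1) s)
          - ((k:ℂ)+1)*(a+(k:ℂ)+1)*(b+(k:ℂ)+1) * (s * RhoS k s) ) := by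
  linear_combination ((1+s)*(s-1)*(2*(1+2*s)*(s-a)*(s-b))) * O1 k s
    + ((1-s)*(s+1)*(2*(1-2*s)*(s+a)*(s+b))) * O2 k s
    + ((1-s^2) * s * (2*(1-2*s)*(s+a)*(s+b) + 2*(1+2*s)*(s-a)*(s-b)
        - 4*(1-4*s^2)*(a+b)) - (1-s^2)*(4*(1-4*s^2))*((k:ℂ)+1)*s) * RhoS_succ k s

lemma tc_rec {a b : ℂ} (ha : 0 < a.re) (hb : 0 < b.re) (m k : ℕ) :
    tc a b m (k+1) * (((k:ℂ)+1) * (a+k) * (b+k)) = ((k:ℂ) - m) * tc a b m k := by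
  have h1 := pochC_ne_zero ha k
  have h2 := pochC_ne_zero hb k
  have h3 : ((k.factorial : ℂ)) ≠ 0 := Nat.cast_ne_zero.mpr k.factorial_ne_zero
  have h4 : (a + k) ≠ 0 := by
    intro h
    have : (a + k).re = 0 := by rw [h]; simp
    simp only [Complex.add_re, Complex.natCast_re] at this
    have : (0:ℝ) < a.re + k := by positivity
    linarith
  have h5 : (b + k) ≠ 0 := by
    intro h
    have : (b + k).re = 0 := by rw [h]; simp
    simp only [Complex.add_re, Complex.natCast_re] at this
    have : (0:ℝ) < b.re + k := by positivity
    linarith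
  have h6 : ((k:ℂ)+1) ≠ 0 := by
    intro h
    have := congrArg Complex.re h
    simp only [Complex.add_re, Complex.natCast_re, Complex.one_re, Complex.zero_re] at this
    have : (0:ℝ) ≤ (k:ℝ) := Nat.cast_nonneg k
    linarith
  rw [tc, tc, pochC_succ, pochC_succ, pochC_succ, Nat.factorial_succ]
  push_cast
  field_simp
  ring

/-- The even-case hypergeometric sum. -/
noncomputable def SE (a b : ℂ) (m : ℕ) (s : ℂ) : ℂ :=
  ∑ k ∈ range (m+1), tc a b m k * PhiS k s

/-- The odd-case hypergeometric sum. -/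
noncomputable def SO (a b : ℂ) (m : ℕ) (s : ℂ) : ℂ :=
  ∑ k ∈ range (m+1), tc (1+a) (1+b) m k * (s * RhoS k s)

lemma sumE {a b : ℂ} (ha : 0 < a.re) (hb : 0 < b.re) (m : ℕ) (s : ℂ) :
    s^2 * ( (2*(1+2*s)*(s-a)*(s-b)) * SE a b m (s-1)
          + (2*(1-2*s)*(s+a)*(s+b)) * SE a b m (s+1)
          - (2*(1-2*s)*(s+a)*(s+b) + 2*(1+2*s)*(s-a)*(s-b)) * SE a b m s )
    = s^2 * (4*(1-4*s^2)) * (m:ℂ) * SE a b m s := by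
  set T : ℂ := s^2 * (4*(1-4*s^2)) with hT
  have expand : s^2 * ( (2*(1+2*s)*(s-a)*(s-b)) * SE a b m (s-1)
          + (2*(1-2*s)*(s+a)*(s+b)) * SE a b m (s+1)
          - (2*(1-2*s)*(s+a)*(s+b) + 2*(1+2*s)*(s-a)*(s-b)) * SE a b m s )
      = ∑ k ∈ range (m+1), tc a b m k *
          (s^2 * ( (2*(1+2*s)*(s-a)*(s-b)) * PhiS k (s-1)
            + (2*(1-2*s)*(s+a)*(s+b)) * PhiS k (s+1)
            - (2*(1-2*s)*(s+a)*(s+b) + 2*(1+2*s)*(s-a)*(s-b)) * PhiS k s )) := by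
    simp only [SE, Finset.mul_sum, ← Finset.sum_add_distrib, ← Finset.sum_sub_distrib]
    exact Finset.sum_congr rfl (fun k _ => by ring)
  rw [expand, Finset.sum_range_succ']
  have h0 : tc a b m 0 * (s^2 * ( (2*(1+2*s)*(s-a)*(s-b)) * PhiS 0 (s-1)
            + (2*(1-2*s)*(s+a)*(s+b)) * PhiS 0 (s+1)
            - (2*(1-2*s)*(s+a)*(s+b) + 2*(1+2*s)*(s-a)*(s-b)) * PhiS 0 s )) = 0 := by
    simp only [PhiS, range_zero, prod_empty]; ring
  rw [h0, add_zero]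
  have step : ∀ k ∈ range m, tc a b m (k+1) *
          (s^2 * ( (2*(1+2*s)*(s-a)*(s-b)) * PhiS (k+1) (s-1)
            + (2*(1-2*s)*(s+a)*(s+b)) * PhiS (k+1) (s+1)
            - (2*(1-2*s)*(s+a)*(s+b) + 2*(1+2*s)*(s-a)*(s-b)) * PhiS (k+1) s ))
        = T * (((k:ℂ)+1) * tc a b m (k+1) * PhiS (k+1) s)
          - T * (((k:ℂ)-(m:ℂ)) * tc a b m k * PhiS k s) := by
    intro k _
    have h1 := PTE a b k s
    have h2 := tc_rec ha hb m k
    linear_combination (tc a b m (k+1)) * h1 - (T * PhiS k s) * h2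
  rw [Finset.sum_congr rfl step, Finset.sum_sub_distrib]
  have hA : ∑ k ∈ range m, T * (((k:ℂ)+1) * tc a b m (k+1) * PhiS (k+1) s)
      = ∑ k ∈ range (m+1), T * ((k:ℂ) * tc a b m k * PhiS k s) := by
    rw [Finset.sum_range_succ']
    simp
  have hB : ∑ k ∈ range m, T * (((k:ℂ)-(m:ℂ)) * tc a b m k * PhiS k s)
      = ∑ k ∈ range (m+1), T * (((k:ℂ)-(m:ℂ)) * tc a b m k * PhiS k s) := by
    rw [Finset.sum_range_succ]
    simp
  rw [hA, hB, ← Finset.sum_sub_distrib]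
  rw [SE, Finset.mul_sum]
  exact Finset.sum_congr rfl (fun k _ => by ring)

lemma sumO {a b : ℂ} (ha : 0 < a.re) (hb : 0 < b.re) (m : ℕ) (s : ℂ) :
    (1-s^2) * ( (2*(1+2*s)*(s-a)*(s-b)) * SO a b m (s-1)
          + (2*(1-2*s)*(s+a)*(s+b)) * SO a b m (s+1)
          + (2*(1-2*s)*(s+a)*(s+b) + 2*(1+2*s)*(s-a)*(s-b)
              - 4*(1-4*s^2)*(a+b)) * SO a b m s )
    = (1-s^2) * (4*(1-4*s^2)) * (m:ℂ) * SO a b m s := by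
  have ha' : 0 < (1+a).re := by simp [Complex.add_re]; linarith
  have hb' : 0 < (1+b).re := by simp [Complex.add_re]; linarith
  set T : ℂ := (1-s^2) * (4*(1-4*s^2)) with hT
  have expand : (1-s^2) * ( (2*(1+2*s)*(s-a)*(s-b)) * SO a b m (s-1)
          + (2*(1-2*s)*(s+a)*(s+b)) * SO a b m (s+1)
          + (2*(1-2*s)*(s+a)*(s+b) + 2*(1+2*s)*(s-a)*(s-b)
              - 4*(1-4*s^2)*(a+b)) * SO a b m s )
      = ∑ k ∈ range (m+1), tc (1+a) (1+b) m k *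
          ((1-s^2) * ( (2*(1+2*s)*(s-a)*(s-b)) * ((s-1) * RhoS k (s-1))
            + (2*(1-2*s)*(s+a)*(s+b)) * ((s+1) * RhoS k (s+1))
            + (2*(1-2*s)*(s+a)*(s+b) + 2*(1+2*s)*(s-a)*(s-b)
                - 4*(1-4*s^2)*(a+b)) * (s * RhoS k s) )) := by
    simp only [SO, Finset.mul_sum, ← Finset.sum_add_distrib]
    exact Finset.sum_congr rfl (fun k _ => by ring)
  rw [expand, Finset.sum_range_succ']
  have h0 : tc (1+a) (1+b) m 0 *
          ((1-s^2) * ( (2*(1+2*s)*(s-a)*(s-b)) * ((s-1) * RhoS 0 (s-1))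
            + (2*(1-2*s)*(s+a)*(s+b)) * ((s+1) * RhoS 0 (s+1))
            + (2*(1-2*s)*(s+a)*(s+b) + 2*(1+2*s)*(s-a)*(s-b)
                - 4*(1-4*s^2)*(a+b)) * (s * RhoS 0 s) )) = 0 := by
    have hR : ∀ t:ℂ, RhoS 0 t = 1 := by
      intro t; simp [RhoS]
    rw [hR, hR, hR]; ring
  rw [h0, add_zero]
  have step : ∀ k ∈ range m, tc (1+a) (1+b) m (k+1) *
          ((1-s^2) * ( (2*(1+2*s)*(s-a)*(s-b)) * ((s-1) * RhoS (k+1) (s-1))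
            + (2*(1-2*s)*(s+a)*(s+b)) * ((s+1) * RhoS (k+1) (s+1))
            + (2*(1-2*s)*(s+a)*(s+b) + 2*(1+2*s)*(s-a)*(s-b)
                - 4*(1-4*s^2)*(a+b)) * (s * RhoS (k+1) s) ))
        = T * (((k:ℂ)+1) * tc (1+a) (1+b) m (k+1) * (s * RhoS (k+1) s))
          - T * (((k:ℂ)-(m:ℂ)) * tc (1+a) (1+b) m k * (s * RhoS k s)) := by
    intro k _
    have h1 := PTO a b k s
    have h2 := tc_rec ha' hb' m k
    linear_combination (tc (1+a) (1+b) m (k+1)) * h1 - (T * (s * RhoS k s)) * h2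
  rw [Finset.sum_congr rfl step, Finset.sum_sub_distrib]
  have hA : ∑ k ∈ range m, T * (((k:ℂ)+1) * tc (1+a) (1+b) m (k+1) * (s * RhoS (k+1) s))
      = ∑ k ∈ range (m+1), T * ((k:ℂ) * tc (1+a) (1+b) m k * (s * RhoS k s)) := by
    rw [Finset.sum_range_succ']
    simp
  have hB : ∑ k ∈ range m, T * (((k:ℂ)-(m:ℂ)) * tc (1+a) (1+b) m k * (s * RhoS k s))
      = ∑ k ∈ range (m+1), T * (((k:ℂ)-(m:ℂ)) * tc (1+a) (1+b) m k * (s * RhoS k s)) := by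
    rw [Finset.sum_range_succ]
    simp
  rw [hA, hB, ← Finset.sum_sub_distrib]
  rw [SO, Finset.mul_sum]
  exact Finset.sum_congr rfl (fun k _ => by ring)

/-- Polynomial realisation of the even-case sum. -/
noncomputable def SEP (a b : ℂ) (m : ℕ) : Polynomial ℂ :=
  ∑ k ∈ range (m+1), C (tc a b m k) * ∏ j ∈ range k, (C ((j:ℂ)^2) - X^2)

/-- Polynomial realisation of the odd-case sum. -/
noncomputable def SOP (a b : ℂ) (m : ℕ) : Polynomial ℂ :=
  ∑ k ∈ range (m+1), C (tc (1+a) (1+b) m k) * (X * ∏ j ∈ Icc 1 k, (C ((j:ℂ)^2) - X^2))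

lemma SEP_eval (a b : ℂ) (m : ℕ) (s : ℂ) : (SEP a b m).eval s = SE a b m s := by
  simp [SEP, SE, eval_finset_sum, eval_prod, PhiS]

lemma SOP_eval (a b : ℂ) (m : ℕ) (s : ℂ) : (SOP a b m).eval s = SO a b m s := by
  simp [SOP, SO, eval_finset_sum, eval_prod, RhoS]

lemma keyE {a b : ℂ} (ha : 0 < a.re) (hb : 0 < b.re) (m : ℕ) (s : ℂ) :
    (2*(1+2*s)*(s-a)*(s-b)) * SE a b m (s-1)
          + (2*(1-2*s)*(s+a)*(s+b)) * SE a b m (s+1)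
          - (2*(1-2*s)*(s+a)*(s+b) + 2*(1+2*s)*(s-a)*(s-b)) * SE a b m s
    = (4*(1-4*s^2)) * (m:ℂ) * SE a b m s := by
  set P := SEP a b m with hP
  set LP : Polynomial ℂ :=
    (2*(1+2*X)*(X - C a)*(X - C b)) * P.comp (X - 1)
      + (2*(1-2*X)*(X + C a)*(X + C b)) * P.comp (X + 1)
      - ((2*(1-2*X)*(X + C a)*(X + C b)) + (2*(1+2*X)*(X - C a)*(X - C b))) * P
    with hLP
  set RP : Polynomial ℂ := (4*(1-4*X^2)) * C (m:ℂ) * P with hRP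
  have evalL : ∀ t : ℂ, LP.eval t
      = (2*(1+2*t)*(t-a)*(t-b)) * SE a b m (t-1)
          + (2*(1-2*t)*(t+a)*(t+b)) * SE a b m (t+1)
          - (2*(1-2*t)*(t+a)*(t+b) + 2*(1+2*t)*(t-a)*(t-b)) * SE a b m t := by
    intro t
    simp [hLP, eval_comp, hP, SEP_eval]
  have evalR : ∀ t : ℂ, RP.eval t = (4*(1-4*t^2)) * (m:ℂ) * SE a b m t := by
    intro t
    simp [hRP, hP, SEP_eval]
  have hpq : LP = RP := by
    apply Polynomial.eq_of_infinite_eval_eq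
    apply Set.Infinite.mono (s := {(0:ℂ)}ᶜ)
    · intro t ht
      have ht0 : t ≠ 0 := ht
      have h := sumE ha hb m t
      have h2 : t^2 * (LP.eval t) = t^2 * (RP.eval t) := by
        rw [evalL, evalR]; linear_combination h
      simp only [Set.mem_setOf_eq]
      exact mul_left_cancel₀ (pow_ne_zero 2 ht0) h2
    · exact Set.Finite.infinite_compl (Set.finite_singleton 0)
  have := congrArg (Polynomial.eval s) hpq
  rw [evalL, evalR] at this
  exact this

lemma keyO {a b : ℂ} (ha : 0 < a.re) (hb : 0 < b.re) (m : ℕ) (s : ℂ) :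
    (2*(1+2*s)*(s-a)*(s-b)) * SO a b m (s-1)
          + (2*(1-2*s)*(s+a)*(s+b)) * SO a b m (s+1)
          + (2*(1-2*s)*(s+a)*(s+b) + 2*(1+2*s)*(s-a)*(s-b)
              - 4*(1-4*s^2)*(a+b)) * SO a b m s
    = (4*(1-4*s^2)) * (m:ℂ) * SO a b m s := by
  set P := SOP a b m with hP
  set LP : Polynomial ℂ :=
    (2*(1+2*X)*(X - C a)*(X - C b)) * P.comp (X - 1)
      + (2*(1-2*X)*(X + C a)*(X + C b)) * P.comp (X + 1)
      + ((2*(1-2*X)*(X + C a)*(X + C b)) + (2*(1+2*X)*(X - C a)*(X - C b))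
          - (4*(1-4*X^2)) * C (a+b)) * P
    with hLP
  set RP : Polynomial ℂ := (4*(1-4*X^2)) * C (m:ℂ) * P with hRP
  have evalL : ∀ t : ℂ, LP.eval t
      = (2*(1+2*t)*(t-a)*(t-b)) * SO a b m (t-1)
          + (2*(1-2*t)*(t+a)*(t+b)) * SO a b m (t+1)
          + (2*(1-2*t)*(t+a)*(t+b) + 2*(1+2*t)*(t-a)*(t-b)
              - 4*(1-4*t^2)*(a+b)) * SO a b m t := by
    intro t
    simp [hLP, eval_comp, hP, SOP_eval]
  have evalR : ∀ t : ℂ, RP.eval t = (4*(1-4*t^2)) * (m:ℂ) * SO a b m t := by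
    intro t
    simp [hRP, hP, SOP_eval]
  have hpq : LP = RP := by
    apply Polynomial.eq_of_infinite_eval_eq
    apply Set.Infinite.mono (s := ({(1:ℂ), (-1:ℂ)} : Set ℂ)ᶜ)
    · intro t ht
      simp only [Set.mem_compl_iff, Set.mem_insert_iff, Set.mem_singleton_iff, not_or] at ht
      have hts : (1 - t^2) ≠ 0 := by
        intro h
        have h' : (1 - t) * (1 + t) = 0 := by linear_combination h
        rcases mul_eq_zero.1 h' with h'' | h''
        · exact ht.1 (by linear_combination -h'')
        · exact ht.2 (by linear_combination h'')
      have h := sumO ha hb m t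
      have h2 : (1-t^2) * (LP.eval t) = (1-t^2) * (RP.eval t) := by
        rw [evalL, evalR]; linear_combination h
      simp only [Set.mem_setOf_eq]
      exact mul_left_cancel₀ hts h2
    · exact Set.Finite.infinite_compl (by simp)
  have := congrArg (Polynomial.eval s) hpq
  rw [evalL, evalR] at this
  exact this

lemma keyE' {a b : ℂ} (ha : 0 < a.re) (hb : 0 < b.re) (m : ℕ) {s : ℂ}
    (h1 : (1:ℂ)-2*s ≠ 0) (h2 : (1:ℂ)+2*s ≠ 0) :
    ((s-a)*(s-b)/(2*(1-2*s))) * SE a b m (s-1) + ((s+a)*(s+b)/(2*(1+2*s))) * SE a b m (s+1)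
    - ((s+a)*(s+b)/(2*(1+2*s)) + (s-a)*(s-b)/(2*(1-2*s))) * SE a b m s
  = (m:ℂ) * SE a b m s := by
  have key := keyE ha hb m s
  have h1' : (1:ℂ) - s*2 ≠ 0 := by rwa [mul_comm]
  have h2' : (1:ℂ) + s*2 ≠ 0 := by rwa [mul_comm]
  field_simp
  linear_combination key/2

lemma keyO' {a b : ℂ} (ha : 0 < a.re) (hb : 0 < b.re) (m : ℕ) {s : ℂ}
    (h1 : (1:ℂ)-2*s ≠ 0) (h2 : (1:ℂ)+2*s ≠ 0) :
    ((s-a)*(s-b)/(2*(1-2*s))) * SO a b m (s-1) + ((s+a)*(s+b)/(2*(1+2*s))) * SO a b m (s+1)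
    + ((s+a)*(s+b)/(2*(1+2*s)) + (s-a)*(s-b)/(2*(1-2*s)) - (a+b)) * SO a b m s
  = (m:ℂ) * SO a b m s := by
  have key := keyO ha hb m s
  have h1' : (1:ℂ) - s*2 ≠ 0 := by rwa [mul_comm]
  have h2' : (1:ℂ) + s*2 ≠ 0 := by rwa [mul_comm]
  field_simp
  linear_combination key/2

lemma SE_neg (a b : ℂ) (m : ℕ) (s : ℂ) : SE a b m (-s) = SE a b m s := by
  simp only [SE]
  exact Finset.sum_congr rfl (fun k _ => by simp [PhiS])

lemma SO_neg (a b : ℂ) (m : ℕ) (s : ℂ) : SO a b m (-s) = -SO a b m s := by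
  simp only [SO, ← Finset.sum_neg_distrib]
  refine Finset.sum_congr rfl (fun k _ => ?_)
  rw [show RhoS k (-s) = RhoS k s from by simp [RhoS]]
  ring

lemma SO_pull (a b : ℂ) (m : ℕ) (s : ℂ) :
    SO a b m s = s * ∑ k ∈ range (m+1), tc (1+a) (1+b) m k * RhoS k s := by
  rw [SO, Finset.mul_sum]
  exact Finset.sum_congr rfl (fun k _ => by ring)

lemma symBI_eval_even (a b : ℂ) {n : ℕ} (hn : Even n) (z : ℂ) :
    (symBI a b n).eval z
      = ((-1:ℂ)^(n/2) * pochC a (n/2) * pochC b (n/2)) * SE a b (n/2) (I*z) := by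
  rw [symBI]
  simp only [hn, if_true, eval_mul, eval_C, eval_finset_sum, eval_prod, eval_add, eval_pow,
    eval_X, SE, tc]
  congr 1
  refine Finset.sum_congr rfl (fun k _ => ?_)
  congr 1
  rw [PhiS]
  refine Finset.prod_congr rfl (fun j _ => ?_)
  linear_combination z^2 * Complex.I_sq

lemma symBI_eval_odd (a b : ℂ) {n : ℕ} (hn : ¬ Even n) (z : ℂ) :
    (symBI a b n).eval z
      = ((-1:ℂ)^(n/2) * pochC (1+a) (n/2) * pochC (1+b) (n/2)) * (-I)
          * SO a b (n/2) (I*z) := by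
  rw [symBI]
  simp only [hn, if_false, eval_mul, eval_C, eval_finset_sum, eval_prod, eval_add, eval_pow,
    eval_X]
  rw [SO_pull]
  have hsum : ∑ k ∈ range (n/2+1),
        (pochC (-((n/2 : ℕ):ℂ)) k / (pochC (1+a) k * pochC (1+b) k * (k.factorial : ℂ))) *
          ∏ j ∈ Icc 1 k, ((j:ℂ)^2 + z^2)
      = ∑ k ∈ range (n/2+1), tc (1+a) (1+b) (n/2) k * RhoS k (I*z) := by
    refine Finset.sum_congr rfl (fun k _ => ?_)
    rw [tc, RhoS]
    congr 1
    exact Finset.prod_congr rfl (fun j _ => by linear_combination z^2 * Complex.I_sq)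
  rw [hsum]
  linear_combination ((-1:ℂ)^(n/2) * pochC (1+a) (n/2) * pochC (1+b) (n/2) * z *
    (∑ k ∈ range (n/2+1), tc (1+a) (1+b) (n/2) k * RhoS k (I*z))) * Complex.I_sq

/-- the symmetric Bannai–Ito polynomials are eigenfunctions of the
Dunkl-type difference operator `D_σ = D₀ + (σ/2)(I - R)`. -/
theorem symBannaiIto_difference_equation (a b σ : ℂ)
    (ha : a.re > 0) (hb : b.re > 0)
    (n : ℕ) (x : ℂ) (hx1 : 2 * I * x ≠ 1) (hx2 : 2 * I * x ≠ -1) :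
    ((I * x - a) * (I * x - b) / (2 * (1 - 2 * I * x))) * (symBI a b n).eval (x + I)
      + ((I * x + a) * (I * x + b) / (2 * (1 + 2 * I * x))) * (symBI a b n).eval (x - I)
      + ((a + b) / 2
          - (I * x + a) * (I * x + b) / (2 * (1 + 2 * I * x))
          - (I * x - a) * (I * x - b) / (2 * (1 - 2 * I * x))) *
          (symBI a b n).eval (-x)
      - ((I * x + a) * (I * x + b) / (2 * (1 + 2 * I * x))
          + (I * x - a) * (I * x - b) / (2 * (1 - 2 * I * x))
          + ((a + b) / 2
            - (I * x + a) * (I * x + b) / (2 * (1 + 2 * I * x))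
            - (I * x - a) * (I * x - b) / (2 * (1 - 2 * I * x)))) *
          (symBI a b n).eval x
      + (σ / 2) * ((symBI a b n).eval x - (symBI a b n).eval (-x))
      = symBIeigen σ n * (symBI a b n).eval x := by
  have h1 : (1:ℂ) - 2*(I*x) ≠ 0 := by
    intro h
    exact hx1 (by linear_combination -h)
  have h2 : (1:ℂ) + 2*(I*x) ≠ 0 := by
    intro h
    exact hx2 (by linear_combination h)
  by_cases hn : Even n
  · -- even case
    have e1 := symBI_eval_even a b hn (x+I)
    rw [show I*(x+I) = I*x - 1 from by linear_combination Complex.I_sq] at e1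
    have e2 := symBI_eval_even a b hn (x-I)
    rw [show I*(x-I) = I*x + 1 from by linear_combination -Complex.I_sq] at e2
    have e3 := symBI_eval_even a b hn (-x)
    rw [show I*(-x) = -(I*x) from by ring, SE_neg] at e3
    have e4 := symBI_eval_even a b hn x
    rw [e1, e2, e3, e4, show symBIeigen σ n = ((n/2 : ℕ):ℂ) from by simp [symBIeigen, hn]]
    have key := keyE' ha hb (n/2) h1 h2
    linear_combination ((-1:ℂ)^(n/2) * pochC a (n/2) * pochC b (n/2)) * key
  · -- odd case
    have e1 := symBI_eval_odd a b hn (x+I)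
    rw [show I*(x+I) = I*x - 1 from by linear_combination Complex.I_sq] at e1
    have e2 := symBI_eval_odd a b hn (x-I)
    rw [show I*(x-I) = I*x + 1 from by linear_combination -Complex.I_sq] at e2
    have e3 := symBI_eval_odd a b hn (-x)
    rw [show I*(-x) = -(I*x) from by ring, SO_neg] at e3
    have e4 := symBI_eval_odd a b hn x
    rw [e1, e2, e3, e4, show symBIeigen σ n = ((n/2 : ℕ):ℂ) + σ from by simp [symBIeigen, hn]]
    have key := keyO' ha hb (n/2) h1 h2
    linear_combination ((-1:ℂ)^(n/2) * pochC (1+a) (n/2) * pochC (1+b) (n/2) * (-I)) * key
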